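/- Partial fractions identity [V] = 2[[G]] for the mKP GLM equation (equation (4.1)). Let p be a scattering function, x ∈ ℝ, and w₊, w₋ resolvent kernels for p. Then for all z, ζ ∈ (-∞,0]: w₊(z,ζ) − w₋(z,ζ) = 2·(p^x_{0,0} + w₊∗p^x_{0,0} + p^x_{0,0}∗w₋ + w₊∗p^x_{0,0}∗w₋)(z,ζ). That is, the kernel w₊ − w₋ of V − V† equals twice the kernel of G = V P V†, the solution operator of the Gelfand–Levitan–Marchenko equation P = G(id − P²). -/

import Mathlib

open MeasureTheory Filter

namespace NCKP

/-- `m × m` complex matrices. -/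
abbrev Mat (m : ℕ) := Matrix (Fin m) (Fin m) ℂ

/-- Matrix-valued kernels on `ℝ²`. -/
abbrev Ker (m : ℕ) := ℝ → ℝ → Mat m

/-- Kernel product `(k₁∗k₂)(z,ζ) := ∫_{-∞}^0 k₁(z,ξ)·k₂(ξ,ζ) dξ`, entrywise Bochner integral. -/
noncomputable def conv {m : ℕ} (k₁ k₂ : Ker m) : Ker m :=
  fun z ζ => Matrix.of fun i j => ∫ ξ in Set.Iic (0:ℝ), (k₁ z ξ * k₂ ξ ζ) i j

/-- `∂_z^a ∂_ζ^b` of a kernel, entrywise. -/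
noncomputable def pder {m : ℕ} (a b : ℕ) (p : Ker m) : Ker m :=
  fun z ζ => Matrix.of fun i j =>
    iteratedDeriv a (fun z' => iteratedDeriv b (fun ζ' => p z' ζ' i j) ζ) z

/-- `p^x_{a,b}(z,ζ) := (∂_z^a ∂_ζ^b p)(z+x, ζ+x)`. -/
noncomputable def pSh {m : ℕ} (p : Ker m) (x : ℝ) (a b : ℕ) : Ker m :=
  fun z ζ => pder a b p (z + x) (ζ + x)

/-- `P̂₁ := p^x_{1,0} + p^x_{0,1}`. -/
noncomputable def pHat1 {m : ℕ} (p : Ker m) (x : ℝ) : Ker m := pSh p x 1 0 + pSh p x 0 1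

/-- `P_{[a,b]} := p^x_{a,b} − p^x_{b,a}`. -/
noncomputable def pBr {m : ℕ} (p : Ker m) (x : ℝ) (a b : ℕ) : Ker m := pSh p x a b - pSh p x b a

/-- Bounded, absolutely integrable over `(-∞,0]` in each argument, and tending to `0`
as either argument tends to `−∞` (entrywise). -/
def KernelDecay {m : ℕ} (k : Ker m) : Prop :=
  (∃ C, ∀ (z ζ : ℝ) (i j : Fin m), ‖k z ζ i j‖ ≤ C) ∧
  (∀ (ζ : ℝ) (i j : Fin m), IntegrableOn (fun z => k z ζ i j) (Set.Iic (0:ℝ))) ∧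
  (∀ (z : ℝ) (i j : Fin m), IntegrableOn (fun ζ => k z ζ i j) (Set.Iic (0:ℝ))) ∧
  (∀ (ζ : ℝ) (i j : Fin m), Tendsto (fun z => k z ζ i j) atBot (nhds 0)) ∧
  (∀ (z : ℝ) (i j : Fin m), Tendsto (fun ζ => k z ζ i j) atBot (nhds 0))

/-- A scattering function (with the `y`,`t` dependence suppressed): smooth, with all
partial derivatives bounded, integrable over `(-∞,0]` in each argument and decaying at `−∞`. -/
def IsScattering {m : ℕ} (p : Ker m) : Prop :=
  (∀ i j : Fin m, ContDiff ℝ (⊤ : ℕ∞) (fun v : ℝ × ℝ => p v.1 v.2 i j)) ∧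
  (∀ a b : ℕ, KernelDecay (pder a b p))

/-- Continuous on `(-∞,0]²`, bounded, and absolutely integrable in each argument. -/
def KernelNice {m : ℕ} (k : Ker m) : Prop :=
  (∀ i j : Fin m, ContinuousOn (fun v : ℝ × ℝ => k v.1 v.2 i j)
    (Set.Iic (0:ℝ) ×ˢ Set.Iic (0:ℝ))) ∧
  (∃ C, ∀ (z ζ : ℝ) (i j : Fin m), ‖k z ζ i j‖ ≤ C) ∧
  (∀ (ζ : ℝ) (i j : Fin m), IntegrableOn (fun z => k z ζ i j) (Set.Iic (0:ℝ))) ∧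
  (∀ (z : ℝ) (i j : Fin m), IntegrableOn (fun ζ => k z ζ i j) (Set.Iic (0:ℝ)))

/-- Entrywise iterated derivative in the parameter `x` of an `x`-family of kernels. -/
noncomputable def xder {m : ℕ} (n : ℕ) (w : ℝ → Ker m) : ℝ → Ker m :=
  fun x z ζ => Matrix.of fun i j => iteratedDeriv n (fun x' => w x' z ζ i j) x

/-- `w x` is the kernel of `V − id`, `V := (id − P)⁻¹`, with parameter `x`:
a smooth family of kernels, whose partial derivatives are all bounded, integrable
and decaying, solving the resolvent equations `w = p^x + p^x∗w = p^x + w∗p^x`. -/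
def IsResolventPlus {m : ℕ} (p : Ker m) (w : ℝ → Ker m) : Prop :=
  (∀ i j : Fin m, ContDiff ℝ (⊤ : ℕ∞) (fun v : ℝ × ℝ × ℝ => w v.1 v.2.1 v.2.2 i j)) ∧
  (∀ (n a b : ℕ) (x : ℝ), KernelDecay (pder a b (xder n w x))) ∧
  (∀ x, w x = pSh p x 0 0 + conv (pSh p x 0 0) (w x)) ∧
  (∀ x, w x = pSh p x 0 0 + conv (w x) (pSh p x 0 0))

/-- `w x` is the kernel of `V† − id`, `V† := (id + P)⁻¹`, with parameter `x`:
it solves `w = −p^x − p^x∗w = −p^x − w∗p^x`. -/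
def IsResolventMinus {m : ℕ} (p : Ker m) (w : ℝ → Ker m) : Prop :=
  (∀ i j : Fin m, ContDiff ℝ (⊤ : ℕ∞) (fun v : ℝ × ℝ × ℝ => w v.1 v.2.1 v.2.2 i j)) ∧
  (∀ (n a b : ℕ) (x : ℝ), KernelDecay (pder a b (xder n w x))) ∧
  (∀ x, w x = -(pSh p x 0 0) - conv (pSh p x 0 0) (w x)) ∧
  (∀ x, w x = -(pSh p x 0 0) - conv (w x) (pSh p x 0 0))

/-- Kernel of the word `A·V'` where `V' = δ + v`. -/
noncomputable def aV {m : ℕ} (A v : Ker m) : Ker m := A + conv A v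

/-- Kernel of the word `V·A` where `V = δ + u`. -/
noncomputable def vA {m : ℕ} (u A : Ker m) : Ker m := A + conv u A

/-- Kernel of the word `V A V'` where `V = δ+u`, `V' = δ+v`. -/
noncomputable def vAv {m : ℕ} (u A v : Ker m) : Ker m := vA u (aV A v)

/-- Kernel of the word `V A V' B V''` where `V = δ+u`, `V' = δ+v`, `V'' = δ+w'`. -/
noncomputable def vAvBv {m : ℕ} (u A v B w' : Ker m) : Ker m := vAv u (conv (aV A v) B) w'

/-- Entrywise `∂_x` of an `x`-family of kernels. -/
noncomputable def dxK {m : ℕ} (E : ℝ → Ker m) (x : ℝ) : Ker m :=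
  fun z ζ => Matrix.of fun i j => deriv (fun x' => E x' z ζ i j) x

end NCKP

namespace NCKP

open MeasureTheory

lemma pder_zero_zero {m : ℕ} (k : Ker m) : pder 0 0 k = k := by
  funext z ζ
  ext i j
  simp [pder]

lemma xder_zero {m : ℕ} (w : ℝ → Ker m) (x : ℝ) : xder 0 w x = w x := by
  funext z ζ
  ext i j
  simp [xder]

lemma conv_apply {m : ℕ} (A B : Ker m) (z ζ : ℝ) (i j : Fin m) :
    conv A B z ζ i j = ∫ ξ in Set.Iic (0:ℝ), (A z ξ * B ξ ζ) i j := rfl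

/-- If `A` is bounded and (a.e. strongly) measurable entrywise and `B` is integrable
entrywise, then the entries of `A * B` are integrable. -/
lemma integrable_entry_mul_of_bdd_left {m : ℕ} (A B : ℝ → Mat m) (i j : Fin m)
    (hAm : ∀ i' k : Fin m,
      AEStronglyMeasurable (fun ξ => A ξ i' k) (volume.restrict (Set.Iic (0:ℝ))))
    (CA : ℝ) (hAb : ∀ (ξ : ℝ) (i' k : Fin m), ‖A ξ i' k‖ ≤ CA)
    (hB : ∀ k j' : Fin m, IntegrableOn (fun ξ => B ξ k j') (Set.Iic (0:ℝ))) :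
    IntegrableOn (fun ξ => (A ξ * B ξ) i j) (Set.Iic (0:ℝ)) := by
  simp only [Matrix.mul_apply]
  exact integrable_finset_sum _ fun k _ =>
    (hB k j).bdd_mul (hAm i k) (ae_of_all _ fun ξ => hAb ξ i k)

/-- If `A` is integrable entrywise and `B` is bounded and measurable entrywise,
then the entries of `A * B` are integrable. -/
lemma integrable_entry_mul_of_bdd_right {m : ℕ} (A B : ℝ → Mat m) (i j : Fin m)
    (hA : ∀ i' k : Fin m, IntegrableOn (fun ξ => A ξ i' k) (Set.Iic (0:ℝ)))
    (hBm : ∀ k j' : Fin m,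
      AEStronglyMeasurable (fun ξ => B ξ k j') (volume.restrict (Set.Iic (0:ℝ))))
    (CB : ℝ) (hBb : ∀ (ξ : ℝ) (k j' : Fin m), ‖B ξ k j'‖ ≤ CB) :
    IntegrableOn (fun ξ => (A ξ * B ξ) i j) (Set.Iic (0:ℝ)) := by
  simp only [Matrix.mul_apply]
  refine integrable_finset_sum _ fun k _ => ?_
  exact ((hA i k).bdd_mul (hBm k j) (ae_of_all _ fun ξ => hBb ξ k j)).congr
    (Filter.Eventually.of_forall fun ξ => mul_comm _ _)

/-- Entrywise, a constant matrix can be pulled into a Bochner integral of matrices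
from the left. -/
lemma mul_integral_entry {m : ℕ} (A : Mat m) (f : ℝ → Mat m) (μ : Measure ℝ)
    (hf : ∀ k j' : Fin m, Integrable (fun η => f η k j') μ) (i j : Fin m) :
    (A * Matrix.of fun k j' => ∫ η, f η k j' ∂μ) i j = ∫ η, (A * f η) i j ∂μ := by
  simp only [Matrix.mul_apply, Matrix.of_apply]
  rw [integral_finset_sum _ fun k _ => (hf k j).const_mul (A i k)]
  exact Finset.sum_congr rfl fun k _ => (integral_const_mul _ _).symm

/-- Entrywise, a constant matrix can be pulled into a Bochner integral of matrices
from the right. -/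
lemma integral_mul_entry {m : ℕ} (f : ℝ → Mat m) (C : Mat m) (μ : Measure ℝ)
    (hf : ∀ i' k : Fin m, Integrable (fun ξ => f ξ i' k) μ) (i j : Fin m) :
    ((Matrix.of fun i' k => ∫ ξ, f ξ i' k ∂μ) * C) i j = ∫ ξ, (f ξ * C) i j ∂μ := by
  simp only [Matrix.mul_apply, Matrix.of_apply]
  rw [integral_finset_sum _ fun k _ => (hf i k).mul_const (C k j)]
  exact Finset.sum_congr rfl fun k _ => (integral_mul_const _ _).symm

/-- Associativity of the kernel product `conv`, entrywise, under suitable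
integrability/boundedness hypotheses (Fubini). -/
lemma conv_assoc_entry {m : ℕ} (A B C : Ker m) (z ζ : ℝ) (i j : Fin m)
    (hAi : ∀ i' k : Fin m, IntegrableOn (fun ξ => A z ξ i' k) (Set.Iic (0:ℝ)))
    (hBc : ∀ k l : Fin m, Continuous fun q : ℝ × ℝ => B q.1 q.2 k l)
    (CB : ℝ) (hBb : ∀ (ξ η : ℝ) (k l : Fin m), ‖B ξ η k l‖ ≤ CB)
    (hCi : ∀ l j' : Fin m, IntegrableOn (fun η => C η ζ l j') (Set.Iic (0:ℝ))) :
    conv (conv A B) C z ζ i j = conv A (conv B C) z ζ i j := by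
  have hAB : ∀ (η : ℝ) (i' k : Fin m),
      Integrable (fun ξ => (A z ξ * B ξ η) i' k) (volume.restrict (Set.Iic (0:ℝ))) := by
    intro η i' k
    simp only [Matrix.mul_apply]
    refine integrable_finset_sum _ fun l _ => ?_
    have hb : Integrable (fun ξ => B ξ η l k * A z ξ i' l) (volume.restrict (Set.Iic (0:ℝ))) :=
      (hAi i' l).bdd_mul
        (((hBc l k).comp (continuous_id.prodMk continuous_const)).aestronglyMeasurable)
        (ae_of_all _ fun ξ => hBb ξ η l k)
    exact hb.congr (Filter.Eventually.of_forall fun ξ => mul_comm _ _)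
  have hBC : ∀ (ξ : ℝ) (k j' : Fin m),
      Integrable (fun η => (B ξ η * C η ζ) k j') (volume.restrict (Set.Iic (0:ℝ))) := by
    intro ξ k j'
    simp only [Matrix.mul_apply]
    refine integrable_finset_sum _ fun l _ => ?_
    exact (hCi l j').bdd_mul
      (((hBc k l).comp (continuous_const.prodMk continuous_id)).aestronglyMeasurable)
      (ae_of_all _ fun η => hBb ξ η k l)
  have hjoint : Integrable (fun q : ℝ × ℝ => ((A z q.1 * B q.1 q.2) * C q.2 ζ) i j)
      ((volume.restrict (Set.Iic (0:ℝ))).prod (volume.restrict (Set.Iic (0:ℝ)))) := by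
    simp only [Matrix.mul_apply, Finset.sum_mul]
    refine integrable_finset_sum _ fun l _ => integrable_finset_sum _ fun k _ => ?_
    have h1 : Integrable (fun q : ℝ × ℝ => A z q.1 i k * C q.2 ζ l j)
        ((volume.restrict (Set.Iic (0:ℝ))).prod (volume.restrict (Set.Iic (0:ℝ)))) :=
      (hAi i k).mul_prod (hCi l j)
    have h2 := h1.bdd_mul ((hBc k l).aestronglyMeasurable)
      (ae_of_all _ fun q => hBb q.1 q.2 k l)
    exact h2.congr (Filter.Eventually.of_forall fun q => by ring)
  calc conv (conv A B) C z ζ i j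
      = ∫ η in Set.Iic (0:ℝ), ∫ ξ in Set.Iic (0:ℝ), ((A z ξ * B ξ η) * C η ζ) i j := by
        rw [conv_apply]
        congr 1
        funext η
        exact integral_mul_entry (fun ξ => A z ξ * B ξ η) (C η ζ) _ (hAB η) i j
    _ = ∫ ξ in Set.Iic (0:ℝ), ∫ η in Set.Iic (0:ℝ), ((A z ξ * B ξ η) * C η ζ) i j :=
        MeasureTheory.integral_integral_swap (f := fun η ξ => ((A z ξ * B ξ η) * C η ζ) i j)
          hjoint.swap
    _ = conv A (conv B C) z ζ i j := by
        rw [conv_apply]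
        congr 1
        funext ξ
        rw [show conv B C ξ ζ
            = Matrix.of fun k j' => ∫ η in Set.Iic (0:ℝ), (B ξ η * C η ζ) k j' from rfl]
        rw [mul_integral_entry (A z ξ) (fun η => B ξ η * C η ζ) _ (hBC ξ) i j]
        congr 1
        funext η
        rw [Matrix.mul_assoc]

/-- **Partial fractions identity `[V] = 2[[G]]` (equation (4.1)):**
`w₊ − w₋ = 2(p^x + w₊∗p^x + p^x∗w₋ + w₊∗p^x∗w₋)`, i.e. the kernel of `V − V†`
equals twice the kernel of `G = V P V†`, the solution operator of the GLM equation
`P = G(id − P²)`, for a scattering function `p` and resolvent kernels `w₊`, `w₋`. -/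
theorem partial_fractions_G {m : ℕ} (p : Ker m) (hp : IsScattering p)
    (wp wm : ℝ → Ker m) (hwp : IsResolventPlus p wp) (hwm : IsResolventMinus p wm)
    (x : ℝ) :
    ∀ z ∈ Set.Iic (0:ℝ), ∀ ζ ∈ Set.Iic (0:ℝ),
      (wp x) z ζ - (wm x) z ζ
      =
      (2:ℕ) • ((pSh p x 0 0 + conv (wp x) (pSh p x 0 0) + conv (pSh p x 0 0) (wm x)
        + conv (wp x) (conv (pSh p x 0 0) (wm x))) z ζ) := by
  -- Basic decay facts for the three kernels involved
  have hdu : KernelDecay (wp x) := by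
    have h := hwp.2.1 0 0 0 x; rwa [xder_zero, pder_zero_zero] at h
  have hdv : KernelDecay (wm x) := by
    have h := hwm.2.1 0 0 0 x; rwa [xder_zero, pder_zero_zero] at h
  have hdp : KernelDecay p := by
    have h := hp.2 0 0; rwa [pder_zero_zero] at h
  obtain ⟨⟨Cu, hCu⟩, _, huI2, _, _⟩ := hdu
  obtain ⟨⟨Cv, hCv⟩, hvI1, _, _, _⟩ := hdv
  obtain ⟨⟨Cp, hCp⟩, _, _, _, _⟩ := hdp
  -- `pSh p x 0 0` is a shift of `p`
  have hPdef : ∀ (z' ζ' : ℝ) (i' k : Fin m),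
      pSh p x 0 0 z' ζ' i' k = p (z' + x) (ζ' + x) i' k := by
    intro z' ζ' i' k
    simp [pSh, pder]
  have hPb : ∀ (z' ζ' : ℝ) (i' k : Fin m), ‖pSh p x 0 0 z' ζ' i' k‖ ≤ Cp := by
    intro z' ζ' i' k; rw [hPdef]; exact hCp _ _ _ _
  -- Continuity facts
  have hPcontQ : ∀ i' k : Fin m,
      Continuous fun q : ℝ × ℝ => pSh p x 0 0 q.1 q.2 i' k := by
    intro i' k
    have h1 : Continuous fun q : ℝ × ℝ => p (q.1 + x) (q.2 + x) i' k :=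
      ((hp.1 i' k).continuous).comp
        (((continuous_fst.add continuous_const)).prodMk
          ((continuous_snd.add continuous_const)))
    exact h1.congr fun q => (hPdef q.1 q.2 i' k).symm
  have hPcont1 : ∀ (ζ' : ℝ) (i' k : Fin m),
      Continuous fun ξ => pSh p x 0 0 ξ ζ' i' k := fun ζ' i' k =>
    (hPcontQ i' k).comp (continuous_id.prodMk continuous_const)
  have hPcont2 : ∀ (z' : ℝ) (i' k : Fin m),
      Continuous fun ξ => pSh p x 0 0 z' ξ i' k := fun z' i' k =>
    (hPcontQ i' k).comp (continuous_const.prodMk continuous_id)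
  have hucont2 : ∀ (z' : ℝ) (i' k : Fin m),
      Continuous fun ξ => wp x z' ξ i' k := fun z' i' k =>
    ((hwp.1 i' k).continuous).comp
      (continuous_const.prodMk (continuous_const.prodMk continuous_id))
  have hvcont1 : ∀ (ζ' : ℝ) (k j' : Fin m),
      Continuous fun ξ => wm x ξ ζ' k j' := fun ζ' k j' =>
    ((hwm.1 k j').continuous).comp
      (continuous_const.prodMk (continuous_id.prodMk continuous_const))
  -- Resolvent identities rearranged
  have h2p := hwp.2.2.2 x
  have h1m := hwm.2.2.1 x
  have hE1 : conv (wp x) (pSh p x 0 0) = wp x - pSh p x 0 0 := by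
    nth_rewrite 2 [h2p]; abel
  have hE2 : conv (pSh p x 0 0) (wm x) = -(wm x) - pSh p x 0 0 := by
    nth_rewrite 2 [h1m]; abel
  -- Main scalar identity
  have main : ∀ (z ζ : ℝ) (i j : Fin m),
      wp x z ζ i j - wm x z ζ i j
        = 2 * (pSh p x 0 0 z ζ i j + conv (wp x) (pSh p x 0 0) z ζ i j
          + conv (pSh p x 0 0) (wm x) z ζ i j
          + conv (wp x) (conv (pSh p x 0 0) (wm x)) z ζ i j) := by
    intro z ζ i j
    have hPv : conv (pSh p x 0 0) (wm x) z ζ i j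
        = -(wm x z ζ i j) - pSh p x 0 0 z ζ i j := by rw [hE2]; rfl
    have hUP : conv (wp x) (pSh p x 0 0) z ζ i j
        = wp x z ζ i j - pSh p x 0 0 z ζ i j := by rw [hE1]; rfl
    have hsplit : ∀ ξ, wp x z ξ
        = pSh p x 0 0 z ξ + conv (wp x) (pSh p x 0 0) z ξ := by
      intro ξ
      conv_lhs => rw [h2p]
      rfl
    have step1 : conv (wp x) (wm x) z ζ i j
        = conv (pSh p x 0 0) (wm x) z ζ i j
          + conv (conv (wp x) (pSh p x 0 0)) (wm x) z ζ i j := by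
      have I1 : IntegrableOn (fun ξ => (pSh p x 0 0 z ξ * wm x ξ ζ) i j)
          (Set.Iic (0:ℝ)) :=
        integrable_entry_mul_of_bdd_left (fun ξ => pSh p x 0 0 z ξ)
          (fun ξ => wm x ξ ζ) i j
          (fun i' k => (hPcont2 z i' k).aestronglyMeasurable)
          Cp (fun ξ i' k => hPb z ξ i' k) (fun k j' => hvI1 ζ k j')
      have I2 : IntegrableOn
          (fun ξ => (conv (wp x) (pSh p x 0 0) z ξ * wm x ξ ζ) i j)
          (Set.Iic (0:ℝ)) := by
        have heq : (fun ξ => (conv (wp x) (pSh p x 0 0) z ξ * wm x ξ ζ) i j)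
            = fun ξ => ((wp x - pSh p x 0 0) z ξ * wm x ξ ζ) i j := by rw [hE1]
        rw [heq]
        refine integrable_entry_mul_of_bdd_left
          (fun ξ => (wp x - pSh p x 0 0) z ξ) (fun ξ => wm x ξ ζ) i j
          (fun i' k => ((hucont2 z i' k).sub (hPcont2 z i' k)).aestronglyMeasurable)
          (Cu + Cp) (fun ξ i' k => ?_) (fun k j' => hvI1 ζ k j')
        calc ‖wp x z ξ i' k - pSh p x 0 0 z ξ i' k‖
            ≤ ‖wp x z ξ i' k‖ + ‖pSh p x 0 0 z ξ i' k‖ := norm_sub_le _ _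
          _ ≤ Cu + Cp := add_le_add (hCu _ _ _ _) (hPb _ _ _ _)
      calc conv (wp x) (wm x) z ζ i j
          = ∫ ξ in Set.Iic (0:ℝ), ((pSh p x 0 0 z ξ * wm x ξ ζ) i j
              + (conv (wp x) (pSh p x 0 0) z ξ * wm x ξ ζ) i j) := by
            rw [conv_apply]
            congr 1
            funext ξ
            rw [hsplit ξ, Matrix.add_mul, Matrix.add_apply]
        _ = _ := by rw [integral_add I1 I2]; rfl
    have hassoc : conv (conv (wp x) (pSh p x 0 0)) (wm x) z ζ i j
        = conv (wp x) (conv (pSh p x 0 0) (wm x)) z ζ i j :=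
      conv_assoc_entry (wp x) (pSh p x 0 0) (wm x) z ζ i j
        (fun i' k => huI2 z i' k) hPcontQ Cp (fun ξ η k l => hPb ξ η k l)
        (fun l j' => hvI1 ζ l j')
    have J1 : IntegrableOn (fun ξ => (wp x z ξ * wm x ξ ζ) i j) (Set.Iic (0:ℝ)) :=
      integrable_entry_mul_of_bdd_right (fun ξ => wp x z ξ) (fun ξ => wm x ξ ζ) i j
        (fun i' k => huI2 z i' k)
        (fun k j' => (hvcont1 ζ k j').aestronglyMeasurable)
        Cv (fun ξ k j' => hCv ξ ζ k j')
    have J2 : IntegrableOn (fun ξ => (wp x z ξ * pSh p x 0 0 ξ ζ) i j)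
        (Set.Iic (0:ℝ)) :=
      integrable_entry_mul_of_bdd_right (fun ξ => wp x z ξ)
        (fun ξ => pSh p x 0 0 ξ ζ) i j
        (fun i' k => huI2 z i' k)
        (fun k j' => (hPcont1 ζ k j').aestronglyMeasurable)
        Cp (fun ξ k j' => hPb ξ ζ k j')
    have step3 : conv (wp x) (conv (pSh p x 0 0) (wm x)) z ζ i j
        = -(conv (wp x) (wm x) z ζ i j) - conv (wp x) (pSh p x 0 0) z ζ i j := by
      calc conv (wp x) (conv (pSh p x 0 0) (wm x)) z ζ i j
          = ∫ ξ in Set.Iic (0:ℝ), (-((wp x z ξ * wm x ξ ζ) i j)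
              - (wp x z ξ * pSh p x 0 0 ξ ζ) i j) := by
            rw [conv_apply]
            congr 1
            funext ξ
            rw [show conv (pSh p x 0 0) (wm x) ξ ζ
                = (-(wm x) - pSh p x 0 0) ξ ζ from by rw [hE2]]
            rw [show (-(wm x) - pSh p x 0 0) ξ ζ
                = -(wm x ξ ζ) - pSh p x 0 0 ξ ζ from rfl]
            rw [Matrix.mul_sub, Matrix.mul_neg, Matrix.sub_apply, Matrix.neg_apply]
        _ = _ := by
            have J1n : IntegrableOn (fun ξ => -((wp x z ξ * wm x ξ ζ) i j))
                (Set.Iic (0:ℝ)) := J1.neg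
            rw [integral_sub J1n J2, integral_neg]
            rfl
    linear_combination step1 + hassoc - step3 - hPv - hUP
  intro z _ ζ _
  ext i j
  simp only [Matrix.sub_apply, Matrix.smul_apply, Pi.add_apply, Matrix.add_apply,
    nsmul_eq_mul, Nat.cast_ofNat]
  linear_combination main z ζ i j

end NCKP
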